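/- Let $F_n$ be the $n \times n$ tridiagonal matrix with $1$ on the main diagonal and superdiagonal and $-1$ on the subdiagonal. The cofactor $M(i,j)$ of the $(i,j)$ entry of $F_n$ equals $f_i \cdot f_{n-j+1}$ if $i \le j$, and $(-1)^{i+j} f_j \cdot f_{n-i+1}$ if $i > j$. -/

import Mathlib

open Matrix

def Gmat (k : ℕ) : Matrix (Fin k) (Fin k) ℤ := fun i j =>
  if (i : ℕ) = (j : ℕ) then 1
  else if (j : ℕ) = (i : ℕ) + 1 then 1
  else if (i : ℕ) = (j : ℕ) + 1 then -1 else 0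

lemma Gmat_apply (k : ℕ) (i j : Fin k) : Gmat k i j =
  if (i : ℕ) = (j : ℕ) then 1
  else if (j : ℕ) = (i : ℕ) + 1 then 1
  else if (i : ℕ) = (j : ℕ) + 1 then -1 else 0 := rfl

lemma Gmat_shift (k : ℕ) (i j : Fin (k+1)) : Gmat (k+2) i.succ j.succ = Gmat (k+1) i j := by
  simp only [Gmat, Fin.val_succ, add_left_inj]

lemma Gmat_shift2 (k : ℕ) (i j : Fin k) : Gmat (k+2) i.succ.succ j.succ.succ = Gmat k i j := by
  simp only [Gmat, Fin.val_succ, add_left_inj]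

lemma succAbove_one_succ (k : ℕ) (j : Fin k) :
    Fin.succAbove (1 : Fin (k+2)) j.succ = j.succ.succ := by
  rw [Fin.succAbove_of_le_castSucc]
  simp [Fin.le_def]

lemma succAbove_one_zero (k : ℕ) :
    Fin.succAbove (1 : Fin (k+2)) (0 : Fin (k+1)) = 0 := by
  rw [Fin.succAbove_of_castSucc_lt]
  · rfl
  · simp [Fin.lt_def]

lemma detG : ∀ k, (Gmat k).det = Nat.fib (k + 1)
  | 0 => by simp [Matrix.det_fin_zero]
  | 1 => by simp [Matrix.det_fin_one, Gmat]
  | (k + 2) => by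
    rw [Matrix.det_succ_row_zero, Fin.sum_univ_succ, Fin.sum_univ_succ]
    have e1 : ((Gmat (k+2)).submatrix Fin.succ (Fin.succAbove 0)).det = Nat.fib (k + 2) := by
      rw [show ((Gmat (k+2)).submatrix Fin.succ (Fin.succAbove 0)) = Gmat (k+1) from ?_, detG (k+1)]
      · funext i j
        simp [Matrix.submatrix_apply, Fin.succAbove_zero, Gmat_shift]
    have e2 : ((Gmat (k+2)).submatrix Fin.succ (Fin.succAbove 1)).det = -(Nat.fib (k + 1)) := by
      rw [Matrix.det_succ_column_zero, Fin.sum_univ_succ]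
      have c0 : ((Gmat (k+2)).submatrix Fin.succ (Fin.succAbove 1)) 0 0 = -1 := by
        simp [Matrix.submatrix_apply, Gmat_apply, succAbove_one_zero]
      have e3 : (((Gmat (k+2)).submatrix Fin.succ (Fin.succAbove 1)).submatrix
          (Fin.succAbove 0) Fin.succ).det = Nat.fib (k + 1) := by
        rw [show (((Gmat (k+2)).submatrix Fin.succ (Fin.succAbove 1)).submatrix
            (Fin.succAbove 0) Fin.succ) = Gmat k from ?_, detG k]
        · funext i j
          simp only [Matrix.submatrix_apply, Fin.succAbove_zero, succAbove_one_succ, Gmat_shift2]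
      rw [c0, e3]
      have hz : ∀ i : Fin k,
          (-1:ℤ) ^ ((i.succ : Fin (k+1)) : ℕ) *
            ((Gmat (k+2)).submatrix Fin.succ (Fin.succAbove 1)) i.succ 0 *
            ((((Gmat (k+2)).submatrix Fin.succ (Fin.succAbove 1))).submatrix
              (Fin.succAbove i.succ) Fin.succ).det = 0 := by
        intro i
        have h0 : ((Gmat (k+2)).submatrix Fin.succ (Fin.succAbove 1)) i.succ 0 = 0 := by
          rw [Matrix.submatrix_apply, succAbove_one_zero, Gmat_apply]
          have a1 := Fin.val_succ i.succ; have a2 := Fin.val_succ i; have a3 : ((0 : Fin (k+2)) : ℕ) = 0 := rfl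
          rw [if_neg (by omega), if_neg (by omega), if_neg (by omega)]
        rw [h0]; ring
      rw [Finset.sum_eq_zero (fun i _ => hz i)]
      simp
    have hz2 : ∀ j : Fin k,
        (-1:ℤ) ^ ((j.succ.succ : Fin (k+2)) : ℕ) * Gmat (k+2) 0 j.succ.succ *
          ((Gmat (k+2)).submatrix Fin.succ (Fin.succAbove j.succ.succ)).det = 0 := by
      intro j
      have h0 : Gmat (k+2) 0 j.succ.succ = 0 := by
        rw [Gmat_apply]
        have a1 := Fin.val_succ j.succ; have a2 := Fin.val_succ j; have a3 : ((0 : Fin (k+2)) : ℕ) = 0 := rfl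
        rw [if_neg (by omega), if_neg (by omega), if_neg (by omega)]
      rw [h0]; ring
    rw [Finset.sum_eq_zero (fun j _ => hz2 j)]
    have g01 : Gmat (k+2) 0 (Fin.succ 0) = 1 := by
      simp only [Gmat, Fin.val_succ, Fin.val_zero]
      norm_num
    have g00 : Gmat (k+2) 0 0 = 1 := by simp [Gmat_apply]
    rw [g00, g01, show ((Fin.succ 0 : Fin (k+2))) = 1 from rfl, e1, e2]
    simp only [Fin.val_zero, Fin.val_one, pow_zero, pow_one]
    push_cast [Nat.fib_add_two]
    ring

def AdjM (n : ℕ) : Matrix (Fin (n+1)) (Fin (n+1)) ℤ := fun p q =>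
  if (q : ℕ) ≤ (p : ℕ) then (Nat.fib ((q:ℕ)+1) : ℤ) * Nat.fib (n - (p:ℕ) + 1)
  else (-1:ℤ)^((p:ℕ)+(q:ℕ)) * Nat.fib ((p:ℕ)+1) * Nat.fib (n - (q:ℕ) + 1)

lemma negpow (a b : ℕ) (h : a % 2 = b % 2) : ((-1:ℤ))^a = (-1)^b := by
  rcases Nat.even_or_odd a with ha|ha
  · rw [Even.neg_one_pow ha, Even.neg_one_pow (by rw [Nat.even_iff] at ha ⊢; omega)]
  · rw [Odd.neg_one_pow ha, Odd.neg_one_pow (by rw [Nat.odd_iff] at ha ⊢; omega)]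

lemma fibZ_add (m k : ℕ) :
    (Nat.fib (m+k+1) : ℤ) = Nat.fib m * Nat.fib k + Nat.fib (m+1) * Nat.fib (k+1) := by
  exact_mod_cast Nat.fib_add m k

lemma sum_ite_val (n m : ℕ) (f : Fin (n+1) → ℤ) :
    (∑ k : Fin (n+1), if (k:ℕ) = m then f k else 0) =
      if h : m < n+1 then f ⟨m, h⟩ else 0 := by
  split
  · next h =>
    rw [Finset.sum_eq_single (⟨m, h⟩ : Fin (n+1))]
    · rw [if_pos rfl]
    · intro b _ hb
      rw [if_neg fun hv => hb (Fin.ext hv)]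
    · intro h'; exact absurd (Finset.mem_univ _) h'
  · next h =>
    refine Finset.sum_eq_zero fun k _ => ?_
    rw [if_neg]
    have := k.isLt; omega

lemma mulA_entry (n : ℕ) (i j : Fin (n+1)) :
    (Gmat (n+1) * AdjM n) i j = if (i:ℕ) = (j:ℕ) then (Nat.fib (n+2) : ℤ) else 0 := by
  have hi := i.isLt
  have hj := j.isLt
  have vle : ∀ (p : Fin (n+1)), (j:ℕ) ≤ (p:ℕ) →
      AdjM n p j = (Nat.fib ((j:ℕ)+1):ℤ) * Nat.fib (n - (p:ℕ) + 1) := by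
    intro p hp; simp only [AdjM]; rw [if_pos hp]
  have vgt : ∀ (p : Fin (n+1)), (p:ℕ) < (j:ℕ) →
      AdjM n p j = (-1:ℤ)^((p:ℕ)+(j:ℕ)) * Nat.fib ((p:ℕ)+1) * Nat.fib (n - (j:ℕ) + 1) := by
    intro p hp; simp only [AdjM]; rw [if_neg (by omega)]
  rw [Matrix.mul_apply]
  have hsplit : ∀ k, Gmat (n+1) i k * AdjM n k j =
      ((if (k:ℕ) = (i:ℕ) then AdjM n k j else 0) +
       (if (k:ℕ) = (i:ℕ)+1 then AdjM n k j else 0)) +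
      (if (i:ℕ) = (k:ℕ)+1 then -AdjM n k j else 0) := by
    intro k
    simp only [Gmat]
    split_ifs <;> first | ring1 | (exfalso; omega)
  rw [Finset.sum_congr rfl (fun k _ => hsplit k), Finset.sum_add_distrib,
    Finset.sum_add_distrib, sum_ite_val n (i:ℕ), sum_ite_val n ((i:ℕ)+1)]
  rw [dif_pos i.isLt]
  simp only [Fin.eta]
  by_cases hi0 : (i:ℕ) = 0
  · -- no subdiagonal term
    rw [Finset.sum_eq_zero (fun k _ => by rw [if_neg (by omega)])]
    by_cases hn0 : n = 0
    · -- 1×1 : i = j = 0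
      rw [dif_neg (by omega), if_pos (by omega)]
      rw [vle i (by omega)]
      subst hn0
      rw [show (i:ℕ) = 0 from hi0, show (j:ℕ) = 0 from by omega]
      norm_num
    · rw [dif_pos (by omega)]
      rcases Nat.lt_trichotomy (j:ℕ) ((i:ℕ)+1) with hlt | heq | hgt
      · -- j = 0 = i : diagonal
        have hj0 : (j:ℕ) = 0 := by omega
        rw [if_pos (by omega), vle i (by omega), vle ⟨(i:ℕ)+1, by omega⟩ (by simp; omega)]
        simp only [Fin.val_mk, hi0, hj0]
        rw [show n - 0 + 1 = (n-1) + 2 from by omega, show n - (0+1) + 1 = (n-1) + 1 from by omega,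
          show n + 2 = (n-1) + 1 + 2 from by omega]
        push_cast [Nat.fib_add_two]
        ring
      · -- j = 1 = i+1
        rw [if_neg (by omega), vgt i (by omega), vle ⟨(i:ℕ)+1, by omega⟩ (by simp; omega)]
        simp only [Fin.val_mk, hi0]
        rw [show (j:ℕ) = 1 from by omega]
        rw [show n - 1 + 1 = n - (0+1) + 1 from by omega]
        norm_num
      · -- j ≥ 2, i = 0
        rw [if_neg (by omega), vgt i (by omega), vgt ⟨(i:ℕ)+1, by omega⟩ (by simp; omega)]
        simp only [Fin.val_mk, hi0]
        rw [show (0:ℕ)+1+(j:ℕ) = (0+(j:ℕ))+1 from by omega, pow_succ]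
        norm_num
  · -- i ≥ 1 : subdiagonal term present
    have h3 : (∑ k : Fin (n+1), if (i:ℕ) = (k:ℕ)+1 then -AdjM n k j else 0) =
        -AdjM n ⟨(i:ℕ)-1, by omega⟩ j := by
      have hc : (∑ k : Fin (n+1), if (i:ℕ) = (k:ℕ)+1 then -AdjM n k j else 0) =
          ∑ k : Fin (n+1), if (k:ℕ) = (i:ℕ)-1 then -AdjM n k j else 0 :=
        Finset.sum_congr rfl (fun k _ =>
          if_congr (show ((i:ℕ) = (k:ℕ)+1) ↔ ((k:ℕ) = (i:ℕ)-1) by omega) rfl rfl)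
      rw [hc, sum_ite_val n ((i:ℕ)-1) (fun k => -AdjM n k j), dif_pos (by omega)]
    rw [h3]
    rcases Nat.lt_trichotomy (j:ℕ) (i:ℕ) with hlt | heq | hgt
    · -- j < i : zero
      rw [if_neg (by omega), vle i (by omega), vle ⟨(i:ℕ)-1, by omega⟩ (by simp; omega)]
      simp only [Fin.val_mk]
      by_cases hin : (i:ℕ) = n
      · rw [dif_neg (by omega)]
        rw [show n - (i:ℕ) + 1 = 1 from by omega, show n - ((i:ℕ)-1) + 1 = 2 from by omega]
        norm_num
      · rw [dif_pos (by omega), vle ⟨(i:ℕ)+1, by omega⟩ (by simp; omega)]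
        simp only [Fin.val_mk]
        rw [show n - (i:ℕ) + 1 = (n-(i:ℕ)) + 1 from rfl,
          show n - ((i:ℕ)+1) + 1 = n - (i:ℕ) - 1 + 1 from by omega,
          show n - ((i:ℕ)-1) + 1 = (n-(i:ℕ)-1) + 1 + 2 from by omega,
          show n - (i:ℕ) = (n - (i:ℕ) - 1) + 1 from by omega]
        push_cast [Nat.fib_add_two]
        ring
    · -- diagonal
      rw [if_pos (by omega), vle i (by omega), vgt ⟨(i:ℕ)-1, by omega⟩ (by simp; omega)]
      simp only [Fin.val_mk]
      have hodd : ((-1:ℤ))^((i:ℕ)-1+(j:ℕ)) = -1 :=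
        Odd.neg_one_pow (by rw [Nat.odd_iff]; omega)
      rw [hodd]
      by_cases hin : (i:ℕ) = n
      · rw [dif_neg (by omega)]
        rw [heq, hin, show n - n + 1 = 1 from by omega, show n-1+1 = n from by omega]
        push_cast [Nat.fib_add_two]
        ring
      · rw [dif_pos (by omega), vle ⟨(i:ℕ)+1, by omega⟩ (by simp; omega)]
        simp only [Fin.val_mk]
        obtain ⟨m, hm⟩ : ∃ m, n = (i:ℕ) + m + 1 := ⟨n - (i:ℕ) - 1, by omega⟩
        rw [show (i:ℕ)-1+1 = (i:ℕ) from by omega, heq,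
          show n - (i:ℕ) + 1 = m + 2 from by omega,
          show n - ((i:ℕ)+1) + 1 = m + 1 from by omega,
          show n + 2 = (i:ℕ) + (m+2) + 1 from by omega,
          fibZ_add (i:ℕ) (m+2)]
        push_cast [Nat.fib_add_two]
        ring
    · -- j > i : zero
      rw [if_neg (by omega), vgt i (by omega), vgt ⟨(i:ℕ)-1, by omega⟩ (by simp; omega)]
      simp only [Fin.val_mk]
      have hsub : ((-1:ℤ))^((i:ℕ)-1+(j:ℕ)) = -((-1:ℤ))^((i:ℕ)+(j:ℕ)) := by
        rw [show (i:ℕ)+(j:ℕ) = ((i:ℕ)-1+(j:ℕ))+1 from by omega, pow_succ]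
        ring
      rw [hsub, dif_pos (by omega)]
      rcases Nat.lt_or_ge ((i:ℕ)+1) (j:ℕ) with hgt2 | hle2
      · rw [vgt ⟨(i:ℕ)+1, by omega⟩ (by simp; omega)]
        simp only [Fin.val_mk]
        rw [show (i:ℕ)+1+(j:ℕ) = ((i:ℕ)+(j:ℕ))+1 from by omega, pow_succ,
          show (i:ℕ)-1+1 = (i:ℕ) from by omega]
        push_cast [Nat.fib_add_two]
        ring
      · -- j = i+1
        have hji : (j:ℕ) = (i:ℕ)+1 := by omega
        rw [vle ⟨(i:ℕ)+1, by omega⟩ (by simp; omega)]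
        simp only [Fin.val_mk]
        have hodd : ((-1:ℤ))^((i:ℕ)+(j:ℕ)) = -1 :=
          Odd.neg_one_pow (by rw [Nat.odd_iff]; omega)
        rw [hodd, hji, show (i:ℕ)-1+1 = (i:ℕ) from by omega,
          show n - ((i:ℕ)+1) + 1 = n - (i:ℕ) from by omega]
        push_cast [Nat.fib_add_two]
        ring

lemma adjM_eq_adjugate (n : ℕ) (F : Matrix (Fin (n+1)) (Fin (n+1)) ℤ)
    (hFG : F = Gmat (n+1)) : Matrix.adjugate F = AdjM n := by
  have hdet : F.det = Nat.fib (n+2) := by rw [hFG, detG]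
  have hmul : F * AdjM n = (Nat.fib (n+2) : ℤ) • (1 : Matrix (Fin (n+1)) (Fin (n+1)) ℤ) := by
    rw [hFG]
    ext i j
    rw [Matrix.smul_apply, Matrix.one_apply, mulA_entry]
    by_cases h : i = j
    · rw [if_pos (by rw [h]), if_pos h, smul_eq_mul, mul_one]
    · rw [if_neg (fun hv => h (Fin.ext hv)), if_neg h, smul_eq_mul, mul_zero]
  have key : F.det • AdjM n = F.det • Matrix.adjugate F := by
    calc F.det • AdjM n = (Matrix.adjugate F * F) * AdjM n := by
          rw [Matrix.adjugate_mul, Matrix.smul_mul, Matrix.one_mul]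
      _ = Matrix.adjugate F * (F * AdjM n) := by rw [Matrix.mul_assoc]
      _ = Matrix.adjugate F * ((Nat.fib (n+2) : ℤ) • 1) := by rw [hmul]
      _ = (Nat.fib (n+2) : ℤ) • Matrix.adjugate F := by rw [Matrix.mul_smul, Matrix.mul_one]
      _ = F.det • Matrix.adjugate F := by rw [hdet]
  have hne : F.det ≠ 0 := by
    rw [hdet]
    exact_mod_cast (Nat.fib_pos.mpr (by omega)).ne'
  ext p q
  have h2 := congrFun (congrFun key p) q
  simp only [Matrix.smul_apply, smul_eq_mul] at h2
  exact (mul_left_cancel₀ hne h2).symm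

/-- Cofactors of the `(n+1) × (n+1)` tridiagonal Fibonacci matrix: the cofactor of
the entry in (1-based) row `i+1` and column `j+1` is `f_{i+1} · f_{n - j + 1}` if
`i ≤ j`, and `(-1)^{i+j} f_{j+1} · f_{n - i + 1}` if `i > j`. -/
theorem cofactor_tridiagonal_fib (n : ℕ)
    (F : Matrix (Fin (n + 1)) (Fin (n + 1)) ℤ)
    (hF : ∀ i j : Fin (n + 1), F i j =
      if (i : ℕ) = (j : ℕ) then 1
      else if (j : ℕ) = (i : ℕ) + 1 then 1
      else if (i : ℕ) = (j : ℕ) + 1 then -1 else 0)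
    (i j : Fin (n + 1)) :
    (-1 : ℤ) ^ ((i : ℕ) + (j : ℕ)) * (F.submatrix i.succAbove j.succAbove).det =
      if (i : ℕ) ≤ (j : ℕ) then
        (Nat.fib ((i : ℕ) + 1) : ℤ) * (Nat.fib (n - (j : ℕ) + 1) : ℤ)
      else
        (-1 : ℤ) ^ ((i : ℕ) + (j : ℕ)) *
          (Nat.fib ((j : ℕ) + 1) : ℤ) * (Nat.fib (n - (i : ℕ) + 1) : ℤ) := by
  have hFG : F = Gmat (n+1) := by
    funext a b
    rw [hF a b]
    rfl
  have h1 := Matrix.adjugate_fin_succ_eq_det_submatrix F j i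
  rw [← h1, adjM_eq_adjugate n F hFG]
  simp only [AdjM]
  rw [show (j:ℕ)+(i:ℕ) = (i:ℕ)+(j:ℕ) from add_comm _ _]
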